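/- In the setting above, the Krein Q-function q(w) := ⟨R̂_{π/2}(i)s₀, (I + w·S_{π/2})(S_{π/2} − wI)^{-1} R̂_{π/2}(i)s₀⟩ satisfies q(w) = π·Re(s₀(i)/s_{π/2}(i)) − π·s₀(w)/s_{π/2}(w) for all nonreal w. -/

import Mathlib

open Complex

/-- `e^#(z) = conj (e (conj z))`. -/
noncomputable def eSharp (e : ℂ → ℂ) (z : ℂ) : ℂ :=
  (starRingEnd ℂ) (e ((starRingEnd ℂ) z))

/-- `s_γ(z) = (i/2)(e^{iγ} e(z) - e^{-iγ} e^#(z))`. -/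
noncomputable def sfun (e : ℂ → ℂ) (γ : ℝ) (z : ℂ) : ℂ :=
  I / 2 * (Complex.exp (I * γ) * e z - Complex.exp (-(I * (γ : ℂ))) * eSharp e z)

/-- The de Branges reproducing kernel
`k(z,w) = (e^#(z) e(w̄) - e(z) e^#(w̄)) / (2πi (z - w̄))`. -/
noncomputable def kfun (e : ℂ → ℂ) (z w : ℂ) : ℂ :=
  (eSharp e z * e ((starRingEnd ℂ) w) - e z * eSharp e ((starRingEnd ℂ) w)) /
    (2 * (Real.pi : ℂ) * I * (z - (starRingEnd ℂ) w))

/-- The action of the resolvent `(S_γ - wI)⁻¹` of the canonical selfadjoint extension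
`S_γ` of the multiplication operator:
`((S_γ - wI)⁻¹ f)(z) = (f(z) - (s_γ(z)/s_γ(w)) f(w)) / (z - w)`. -/
noncomputable def res (e : ℂ → ℂ) (γ : ℝ) (w : ℂ) (f : ℂ → ℂ) (z : ℂ) : ℂ :=
  (f z - sfun e γ z / sfun e γ w * f w) / (z - w)

open scoped InnerProductSpace

set_option maxHeartbeats 2000000

/-- In the setting of a de Branges space `B = B(e)` (`e` Hermite–Biehler,
no real zeros) realized as an RKHS with evaluation `ev` and kernel vectors `K`,
let `g = R̂_{π/2}(i) s₀ = -(π/s_{π/2}(i)) K(-i)` and let `rg = (S_{π/2} - wI)⁻¹ g`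
(characterized by `(z - w)·(ev rg)(z) = (ev g)(z) - (s_{π/2}(z)/s_{π/2}(w))(ev g)(w)`).
Then the Krein Q-function
`q(w) = ⟪g, (I + w S_{π/2})(S_{π/2} - wI)⁻¹ g⟫ = ⟪g, w•g + (1+w²)•rg⟫`
satisfies `q(w) = π·Re(s₀(i)/s_{π/2}(i)) - π·s₀(w)/s_{π/2}(w)` for nonreal `w`. -/
theorem stmt16 {B : Type*} [NormedAddCommGroup B] [InnerProductSpace ℂ B] [CompleteSpace B]
    (e : ℂ → ℂ) (he : Differentiable ℂ e)
    (hHB : ∀ z : ℂ, 0 < z.im → ‖e ((starRingEnd ℂ) z)‖ < ‖e z‖)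
    (hnoreal : ∀ x : ℝ, e x ≠ 0)
    (ev : B →ₗ[ℂ] (ℂ → ℂ)) (K : ℂ → B)
    (hK : ∀ (w : ℂ) (f : B), (inner ℂ (K w) f : ℂ) = ev f w)
    (hKk : ∀ z w : ℂ, ev (K w) z = kfun e z w)
    (w : ℂ) (hw : w.im ≠ 0)
    (hsw : sfun e (Real.pi / 2) w ≠ 0) (hsi : sfun e (Real.pi / 2) I ≠ 0)
    (g rg : B)
    (hg : g = (-(Real.pi : ℂ) / sfun e (Real.pi / 2) I) • K (-I))
    (hrg : ∀ z : ℂ, (z - w) * ev rg z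
      = ev g z - sfun e (Real.pi / 2) z / sfun e (Real.pi / 2) w * ev g w) :
    (inner ℂ g (w • g + (1 + w ^ 2) • rg) : ℂ)
      = (Real.pi : ℂ) * ((sfun e 0 I / sfun e (Real.pi / 2) I).re : ℂ)
        - (Real.pi : ℂ) * (sfun e 0 w / sfun e (Real.pi / 2) w) := by
  have hπ : (Real.pi : ℂ) ≠ 0 := by exact_mod_cast Real.pi_ne_zero
  have hI2 : (I : ℂ) ^ 2 = -1 := Complex.I_sq
  have hI3 : (I : ℂ) ^ 3 = -I := by linear_combination I * hI2
  have hI4 : (I : ℂ) ^ 4 = 1 := by linear_combination (I ^ 2 - 1) * hI2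
  have hI5 : (I : ℂ) ^ 5 = I := by linear_combination (I ^ 3 - I) * hI2
  have hI6 : (I : ℂ) ^ 6 = -1 := by linear_combination (I ^ 4 - I ^ 2 + 1) * hI2
  have hI7 : (I : ℂ) ^ 7 = -I := by linear_combination (I ^ 5 - I ^ 3 + I) * hI2
  have hI8 : (I : ℂ) ^ 8 = 1 := by linear_combination (I ^ 6 - I ^ 4 + I ^ 2 - 1) * hI2
  have hI9 : (I : ℂ) ^ 9 = I := by linear_combination (I ^ 7 - I ^ 5 + I ^ 3 - I) * hI2
  have hI10 : (I : ℂ) ^ 10 = -1 := by linear_combination (I ^ 8 - I ^ 6 + I ^ 4 - I ^ 2 + 1) * hI2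
  have hsp : ∀ z : ℂ, sfun e (Real.pi / 2) z = -(e z + eSharp e z) / 2 := by
    intro z
    have h1 : Complex.exp (I * ((Real.pi / 2 : ℝ) : ℂ)) = I := by
      rw [mul_comm, Complex.exp_mul_I, ← Complex.ofReal_cos, ← Complex.ofReal_sin,
        Real.cos_pi_div_two, Real.sin_pi_div_two]
      simp
    have h2 : Complex.exp (-(I * ((Real.pi / 2 : ℝ) : ℂ))) = -I := by
      rw [Complex.exp_neg, h1, Complex.inv_I]
    unfold sfun
    rw [h1, h2]
    linear_combination ((e z + eSharp e z) / 2) * hI2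
  have hs0 : ∀ z : ℂ, sfun e 0 z = I / 2 * (e z - eSharp e z) := by
    intro z
    unfold sfun
    norm_num
  have heI : eSharp e I = (starRingEnd ℂ) (e (-I)) := by
    unfold eSharp; rw [Complex.conj_I]
  have hemI : eSharp e (-I) = (starRingEnd ℂ) (e I) := by
    unfold eSharp; rw [map_neg, Complex.conj_I, neg_neg]
  have hc0 : (starRingEnd ℂ) (sfun e 0 I) = sfun e 0 (-I) := by
    rw [hs0, hs0, heI, hemI]
    simp only [map_mul, map_sub, map_div₀, Complex.conj_I, map_ofNat]
    simp only [Complex.conj_conj]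
    ring
  have hcp : (starRingEnd ℂ) (sfun e (Real.pi / 2) I) = sfun e (Real.pi / 2) (-I) := by
    rw [hsp, hsp, heI, hemI]
    simp only [map_div₀, map_neg, map_add, map_ofNat]
    simp only [Complex.conj_conj]
    ring
  have hspm : sfun e (Real.pi / 2) (-I) ≠ 0 := by
    rw [← hcp]
    simpa using hsi
  have hmII : (-I - I : ℂ) ≠ 0 := by
    intro h; exact Complex.I_ne_zero (by linear_combination -h / 2)
  have hnII : (-I : ℂ) ≠ I := by
    intro h; exact Complex.I_ne_zero (by linear_combination -h / 2)
  -- the Q-function in terms of evaluations at -I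
  have hq : (inner ℂ g (w • g + (1 + w ^ 2) • rg) : ℂ)
      = (-(Real.pi : ℂ) / sfun e (Real.pi / 2) (-I))
        * (w * ev g (-I) + (1 + w ^ 2) * ev rg (-I)) := by
    have hgx : ∀ x : B, (inner ℂ g x : ℂ)
        = (-(Real.pi : ℂ) / sfun e (Real.pi / 2) (-I)) * ev x (-I) := by
      intro x
      conv_lhs => rw [hg]
      rw [inner_smul_left, hK, map_div₀, map_neg, Complex.conj_ofReal, hcp]
    rw [hgx]
    congr 1
    rw [map_add, map_smul, map_smul]
    simp only [Pi.add_apply, Pi.smul_apply, smul_eq_mul]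
  -- evaluation of g
  have hevg : ∀ z : ℂ, ev g z = (-(Real.pi : ℂ) / sfun e (Real.pi / 2) I) * kfun e z (-I) := by
    intro z; rw [hg, map_smul, Pi.smul_apply, smul_eq_mul, hKk]
  have hkz : ∀ z : ℂ, kfun e z (-I)
      = (eSharp e z * e I - e z * (starRingEnd ℂ) (e (-I))) / (2 * (Real.pi : ℂ) * I * (z - I)) := by
    intro z
    unfold kfun
    rw [map_neg, Complex.conj_I, neg_neg, heI]
  -- key formula: (ev g)(z)·(z - I) = s₀(z) - (s₀(I)/s_{π/2}(I))·s_{π/2}(z) for z ≠ I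
  have hG : ∀ z : ℂ, z ≠ I → ev g z * (z - I)
      = sfun e 0 z - sfun e 0 I / sfun e (Real.pi / 2) I * sfun e (Real.pi / 2) z := by
    intro z hz
    have hzI : z - I ≠ 0 := sub_ne_zero.mpr hz
    rw [hevg, hkz]
    field_simp [hsi, hπ, hzI, Complex.I_ne_zero]
    simp only [hs0, hsp, heI, hemI]
    ring_nf
    simp only [hI2, hI3, hI4, hI5, hI6, hI7, hI8, hI9, hI10]
    ring
  -- value of ev g at -I
  have hGm : ev g (-I) = (sfun e 0 (-I)
      - sfun e 0 I / sfun e (Real.pi / 2) I * sfun e (Real.pi / 2) (-I)) / (-I - I) := by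
    rw [eq_div_iff hmII]
    exact hG (-I) hnII
  -- real part as average with conjugate
  have hre : ((sfun e 0 I / sfun e (Real.pi / 2) I).re : ℂ)
      = (sfun e 0 I / sfun e (Real.pi / 2) I
        + sfun e 0 (-I) / sfun e (Real.pi / 2) (-I)) / 2 := by
    have h := Complex.add_conj (sfun e 0 I / sfun e (Real.pi / 2) I)
    rw [map_div₀, hc0, hcp] at h
    push_cast at h
    linear_combination -h / 2
  rw [hq, hre]
  by_cases hw1 : w = I
  · subst hw1
    have h0 : (1 + I ^ 2 : ℂ) = 0 := by rw [hI2]; ring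
    rw [h0, hGm]
    field_simp
    ring_nf
  by_cases hw2 : w = -I
  · subst hw2
    have h0 : (1 + (-I) ^ 2 : ℂ) = 0 := by
      rw [neg_pow, hI2]; ring
    rw [h0, hGm]
    field_simp
    ring_nf
  · -- main case: w ≠ ±I
    have hwI : w - I ≠ 0 := sub_ne_zero.mpr hw1
    have hE1 : ev g (-I) * (-I - I) * sfun e (Real.pi / 2) I
        = sfun e 0 (-I) * sfun e (Real.pi / 2) I - sfun e 0 I * sfun e (Real.pi / 2) (-I) := by
      rw [hG (-I) hnII]
      field_simp
    have hE2 : ev g w * (w - I) * sfun e (Real.pi / 2) I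
        = sfun e 0 w * sfun e (Real.pi / 2) I - sfun e 0 I * sfun e (Real.pi / 2) w := by
      rw [hG w hw1]
      field_simp
    have hE3 : (-I - w) * ev rg (-I) * sfun e (Real.pi / 2) w
        = ev g (-I) * sfun e (Real.pi / 2) w - sfun e (Real.pi / 2) (-I) * ev g w := by
      rw [hrg (-I)]
      field_simp
    have hgoal : -2 * (Real.pi : ℂ) * sfun e (Real.pi / 2) I * sfun e (Real.pi / 2) w
          * (w * ev g (-I) + (1 + w ^ 2) * ev rg (-I))
        = (Real.pi : ℂ) * sfun e (Real.pi / 2) w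
            * (sfun e 0 I * sfun e (Real.pi / 2) (-I) + sfun e 0 (-I) * sfun e (Real.pi / 2) I)
          - 2 * (Real.pi : ℂ) * sfun e 0 w * sfun e (Real.pi / 2) (-I) * sfun e (Real.pi / 2) I := by
      linear_combination ((Real.pi : ℂ) * sfun e (Real.pi / 2) w) * hE1
        + (-2 * (Real.pi : ℂ) * sfun e (Real.pi / 2) (-I)) * hE2
        + (2 * (Real.pi : ℂ) * sfun e (Real.pi / 2) I * (w - I)) * hE3
        + (-2 * (Real.pi : ℂ) * sfun e (Real.pi / 2) I * sfun e (Real.pi / 2) w * ev rg (-I)) * hI2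
    have hne : (2 : ℂ) * sfun e (Real.pi / 2) (-I) * sfun e (Real.pi / 2) I
        * sfun e (Real.pi / 2) w ≠ 0 :=
      mul_ne_zero (mul_ne_zero (mul_ne_zero two_ne_zero hspm) hsi) hsw
    apply mul_left_cancel₀ hne
    have h1 : (2 : ℂ) * sfun e (Real.pi / 2) (-I) * sfun e (Real.pi / 2) I * sfun e (Real.pi / 2) w
          * (-(Real.pi : ℂ) / sfun e (Real.pi / 2) (-I)
            * (w * ev g (-I) + (1 + w ^ 2) * ev rg (-I)))
        = -2 * (Real.pi : ℂ) * sfun e (Real.pi / 2) I * sfun e (Real.pi / 2) w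
            * (w * ev g (-I) + (1 + w ^ 2) * ev rg (-I)) := by
      field_simp
    have h2 : (2 : ℂ) * sfun e (Real.pi / 2) (-I) * sfun e (Real.pi / 2) I * sfun e (Real.pi / 2) w
          * ((Real.pi : ℂ) * ((sfun e 0 I / sfun e (Real.pi / 2) I
              + sfun e 0 (-I) / sfun e (Real.pi / 2) (-I)) / 2)
            - (Real.pi : ℂ) * (sfun e 0 w / sfun e (Real.pi / 2) w))
        = (Real.pi : ℂ) * sfun e (Real.pi / 2) w
            * (sfun e 0 I * sfun e (Real.pi / 2) (-I) + sfun e 0 (-I) * sfun e (Real.pi / 2) I)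
          - 2 * (Real.pi : ℂ) * sfun e 0 w * sfun e (Real.pi / 2) (-I) * sfun e (Real.pi / 2) I := by
      field_simp
    rw [h1, h2, hgoal]
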